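/- Let φ_α = Σ_{I ∈ 𝒮} (x_I / a_I^{1/q}) χ_{A_I}, where A_I = I \ ⋃_{J ∈ 𝒮, J* = I} J has μ(A_I) = α μ(I), x_I = λ γ^{r(I)} μ(I)^{1/q} with λ = f α^{−1/q'}(1 − γ(1−α)), and γ = (z−α)/(z(1−α)) for some z with γ(1−α) < 1 and γ^q(1−α) < 1. Then ∫_X φ_α dμ = f and ∫_X φ_α^q dμ = f^q α (1−α)^{q−1} / (−(z−α)^q + (1−α)^{q−1} z^q). -/

import Mathlib

open MeasureTheory Set
open scoped ENNReal Classical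

lemma tsum_subtype_ite {β : Type*} (P : β → Prop) [∀ y, Decidable (P y)] (f : β → ℝ≥0∞) :
    ∑' x : {y : β // P y}, f x = ∑' x : β, if P x then f x else 0 := by
  have h : ∑' x : {y : β | P y}, f x = ∑' x : β, Set.indicator {y | P y} f x :=
    tsum_subtype {y | P y} f
  rw [show (∑' x : {y : β // P y}, f x) = ∑' x : {y : β | P y}, f x from rfl, h]
  exact tsum_congr fun x => by by_cases hx : P x <;> simp [hx, Set.indicator_apply]

lemma rank_measure {X : Type*} [MeasurableSpace X] (μ : Measure X) [IsProbabilityMeasure μ]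
    (α : ℝ) (S : Set (Set X)) (r : Set X → ℕ) (parent : Set X → Set X)
    (huniv : Set.univ ∈ S) (hr0 : r Set.univ = 0)
    (hroot : ∀ I ∈ S, r I = 0 → I = Set.univ)
    (hparent : ∀ J ∈ S, 0 < r J →
      parent J ∈ S ∧ J ⊆ parent J ∧ r J = r (parent J) + 1)
    (hchild : ∀ I ∈ S,
      ∑' J : {J : Set X // J ∈ S ∧ parent J = I ∧ r J = r I + 1}, μ (J : Set X) =
        ENNReal.ofReal (1 - α) * μ I) :
    ∀ n, (∑' I : Set X, if I ∈ S ∧ r I = n then μ I else 0) =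
      ENNReal.ofReal (1 - α) ^ n := by
  intro n
  induction n with
  | zero =>
    rw [tsum_eq_single Set.univ ?_]
    · simp [huniv, hr0, measure_univ]
    · intro I hI
      rw [if_neg]
      rintro ⟨h1, h2⟩
      exact hI (hroot I h1 h2)
  | succ n ih =>
    have key : ∀ J : Set X, (if J ∈ S ∧ r J = n + 1 then μ J else 0) =
        ∑' I : Set X, if I ∈ S ∧ r I = n then
          (if J ∈ S ∧ parent J = I ∧ r J = r I + 1 then μ J else 0) else 0 := by
      intro J
      by_cases hJ : J ∈ S ∧ r J = n + 1
      · obtain ⟨hJS, hJr⟩ := hJ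
        have hp := hparent J hJS (by omega)
        have hpr : r (parent J) = n := by omega
        rw [if_pos ⟨hJS, hJr⟩, tsum_eq_single (parent J) ?_]
        · rw [if_pos ⟨hp.1, hpr⟩, if_pos ⟨hJS, rfl, hp.2.2⟩]
        · intro I hI
          split
          · rw [if_neg]; rintro ⟨-, h2, -⟩; exact hI h2.symm
          · rfl
      · rw [if_neg hJ]
        symm
        rw [Summable.tsum_eq_zero_iff ENNReal.summable]
        intro I
        split
        · rename_i h
          rw [if_neg]
          rintro ⟨h1, -, h3⟩
          exact hJ ⟨h1, by omega⟩
        · rfl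
    calc ∑' J : Set X, (if J ∈ S ∧ r J = n + 1 then μ J else 0)
        = ∑' (J : Set X) (I : Set X), if I ∈ S ∧ r I = n then
            (if J ∈ S ∧ parent J = I ∧ r J = r I + 1 then μ J else 0) else 0 :=
          tsum_congr key
      _ = ∑' (I : Set X) (J : Set X), if I ∈ S ∧ r I = n then
            (if J ∈ S ∧ parent J = I ∧ r J = r I + 1 then μ J else 0) else 0 :=
          ENNReal.tsum_comm
      _ = ∑' (I : Set X), if I ∈ S ∧ r I = n then ENNReal.ofReal (1 - α) * μ I else 0 := by
          refine tsum_congr fun I => ?_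
          by_cases hI : I ∈ S ∧ r I = n
          · simp only [if_pos hI]
            rw [← hchild I hI.1, tsum_subtype_ite]
          · simp [hI]
      _ = ENNReal.ofReal (1 - α) * ∑' (I : Set X), if I ∈ S ∧ r I = n then μ I else 0 := by
          rw [← ENNReal.tsum_mul_left]
          exact tsum_congr fun I => by split <;> simp
      _ = ENNReal.ofReal (1 - α) ^ (n + 1) := by rw [ih]; ring

lemma regroup {X : Type*} [MeasurableSpace X] (μ : Measure X)
    (α : ℝ) (S : Set (Set X)) (r : Set X → ℕ)
    (hrank : ∀ n, (∑' I : Set X, if I ∈ S ∧ r I = n then μ I else 0) =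
      ENNReal.ofReal (1 - α) ^ n)
    (F : ℕ → ℝ≥0∞) :
    ∑' I : S, F (r (I : Set X)) * μ (I : Set X) =
      ∑' n : ℕ, F n * ENNReal.ofReal (1 - α) ^ n := by
  have h1 : ∑' I : S, F (r (I : Set X)) * μ (I : Set X) =
      ∑' I : Set X, if I ∈ S then F (r I) * μ I else 0 :=
    by exact tsum_subtype_ite (· ∈ S) (fun I => F (r I) * μ I)
  rw [h1]
  have key : ∀ I : Set X, (if I ∈ S then F (r I) * μ I else 0) =
      ∑' n : ℕ, if I ∈ S ∧ r I = n then F n * μ I else 0 := by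
    intro I
    by_cases hI : I ∈ S
    · rw [if_pos hI, tsum_eq_single (r I) ?_, if_pos ⟨hI, rfl⟩]
      intro n hn
      rw [if_neg]
      rintro ⟨-, h2⟩
      exact hn h2.symm
    · rw [if_neg hI]
      symm
      rw [Summable.tsum_eq_zero_iff ENNReal.summable]
      intro n
      rw [if_neg]
      rintro ⟨h1, -⟩
      exact hI h1
  calc ∑' I : Set X, (if I ∈ S then F (r I) * μ I else 0)
      = ∑' (I : Set X) (n : ℕ), if I ∈ S ∧ r I = n then F n * μ I else 0 :=
        tsum_congr key
    _ = ∑' (n : ℕ) (I : Set X), if I ∈ S ∧ r I = n then F n * μ I else 0 :=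
        ENNReal.tsum_comm
    _ = ∑' n : ℕ, F n * ∑' I : Set X, (if I ∈ S ∧ r I = n then μ I else 0) := by
        refine tsum_congr fun n => ?_
        rw [← ENNReal.tsum_mul_left]
        exact tsum_congr fun I => by split <;> simp
    _ = ∑' n : ℕ, F n * ENNReal.ofReal (1 - α) ^ n := by
        exact tsum_congr fun n => by rw [hrank n]

lemma integral_aux {X : Type*} [MeasurableSpace X] (μ : Measure X) [IsProbabilityMeasure μ]
    (α : ℝ) (S : Set (Set X)) (hScount : S.Countable) (r : Set X → ℕ)
    (hrank : ∀ n, (∑' I : Set X, if I ∈ S ∧ r I = n then μ I else 0) =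
      ENNReal.ofReal (1 - α) ^ n)
    (A : Set X → Set X) (hAmeas : ∀ I ∈ S, MeasurableSet (A I))
    (hAmes : ∀ I ∈ S, μ (A I) = ENNReal.ofReal α * μ I)
    (N : Set X) (hN : μ N = 0)
    (hcov : ∀ x ∉ N, ∃ I ∈ S, x ∈ A I)
    (hdisj : ∀ x ∉ N, ∀ I ∈ S, ∀ J ∈ S, x ∈ A I → x ∈ A J → I = J)
    (c d : ℝ) (hc : 0 ≤ c) (hd : 0 ≤ d)
    (ψ : X → ℝ) (hψ : ∀ x ∉ N, ∀ I ∈ S, x ∈ A I → ψ x = c * d ^ r I) :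
    ∫ x, ψ x ∂μ = (∑' n : ℕ, ENNReal.ofReal (c * d ^ n) * ENNReal.ofReal α *
      ENNReal.ofReal (1 - α) ^ n).toReal := by
  haveI := hScount.to_subtype
  set g : X → ℝ≥0∞ := fun x =>
    ∑' I : S, ENNReal.ofReal (c * d ^ r (I : Set X)) *
      (A (I : Set X)).indicator (fun _ => (1 : ℝ≥0∞)) x with hgdef
  have hgmeas : Measurable g := by
    apply Measurable.ennreal_tsum
    intro I
    exact (measurable_const.indicator (hAmeas I I.2)).const_mul _
  have hNae : ∀ᵐ x ∂μ, x ∉ N := by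
    rw [ae_iff]
    simpa only [not_not, Set.setOf_mem_eq] using hN
  have hgood : ∀ x ∉ N, g x = ENNReal.ofReal (ψ x) ∧ 0 ≤ ψ x := by
    intro x hx
    obtain ⟨I₀, hI₀S, hxI₀⟩ := hcov x hx
    have hval : ψ x = c * d ^ r I₀ := hψ x hx I₀ hI₀S hxI₀
    have hvnn : 0 ≤ ψ x := by rw [hval]; positivity
    refine ⟨?_, hvnn⟩
    show (∑' I : S, ENNReal.ofReal (c * d ^ r (I : Set X)) *
      (A (I : Set X)).indicator (fun _ => (1 : ℝ≥0∞)) x) = ENNReal.ofReal (ψ x)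
    rw [tsum_eq_single (⟨I₀, hI₀S⟩ : S) ?_]
    · rw [Set.indicator_of_mem hxI₀, mul_one, hval]
    · intro J hJ
      have hxJ : x ∉ A (J : Set X) := by
        intro hmem
        exact hJ (Subtype.ext (hdisj x hx (J : Set X) J.2 I₀ hI₀S hmem hxI₀))
      rw [Set.indicator_of_notMem hxJ, mul_zero]
  have hψae : (fun x => ENNReal.ofReal (ψ x)) =ᵐ[μ] g :=
    hNae.mono fun x hx => ((hgood x hx).1).symm
  have hψnn : 0 ≤ᵐ[μ] ψ := hNae.mono fun x hx => (hgood x hx).2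
  have hψm : AEStronglyMeasurable ψ μ := by
    refine (hgmeas.ennreal_toReal.aestronglyMeasurable).congr ?_
    refine hNae.mono fun x hx => ?_
    show (g x).toReal = ψ x
    rw [(hgood x hx).1, ENNReal.toReal_ofReal (hgood x hx).2]
  rw [integral_eq_lintegral_of_nonneg_ae hψnn hψm, lintegral_congr_ae hψae]
  congr 1
  calc ∫⁻ x, g x ∂μ
      = ∑' I : S, ∫⁻ x, ENNReal.ofReal (c * d ^ r (I : Set X)) *
          (A (I : Set X)).indicator (fun _ => (1 : ℝ≥0∞)) x ∂μ := by
        rw [hgdef]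
        exact lintegral_tsum fun I =>
          ((measurable_const.indicator (hAmeas I I.2)).const_mul _).aemeasurable
    _ = ∑' I : S, ENNReal.ofReal (c * d ^ r (I : Set X)) * μ (A (I : Set X)) := by
        refine tsum_congr fun I => ?_
        rw [lintegral_const_mul _ (measurable_const.indicator (hAmeas I I.2))]
        congr 1
        rw [lintegral_indicator (hAmeas I I.2)]
        simp
    _ = ∑' I : S, (ENNReal.ofReal (c * d ^ r (I : Set X)) * ENNReal.ofReal α) *
          μ (I : Set X) := by
        refine tsum_congr fun I => ?_
        rw [hAmes I I.2, mul_assoc]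
    _ = ∑' n : ℕ, ENNReal.ofReal (c * d ^ n) * ENNReal.ofReal α *
          ENNReal.ofReal (1 - α) ^ n := by
        rw [regroup μ α S r hrank (fun n => ENNReal.ofReal (c * d ^ n) * ENNReal.ofReal α)]

lemma tsum_val (α c d : ℝ) (hα0 : 0 < α) (hc : 0 ≤ c) (hd : 0 ≤ d)
    (hα1 : α < 1) (hd1 : d * (1 - α) < 1) :
    (∑' n : ℕ, ENNReal.ofReal (c * d ^ n) * ENNReal.ofReal α *
      ENNReal.ofReal (1 - α) ^ n) = ENNReal.ofReal (c * α / (1 - d * (1 - α))) := by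
  have h1α : (0:ℝ) ≤ 1 - α := by linarith
  have hy0 : (0:ℝ) < 1 - d * (1 - α) := by linarith
  have step : ∀ n : ℕ, ENNReal.ofReal (c * d ^ n) * ENNReal.ofReal α *
      ENNReal.ofReal (1 - α) ^ n =
      ENNReal.ofReal (c * α) * ENNReal.ofReal (d * (1 - α)) ^ n := by
    intro n
    rw [ENNReal.ofReal_mul hc, ENNReal.ofReal_mul hd, ENNReal.ofReal_pow hd, mul_pow,
      ENNReal.ofReal_mul hc]
    ring
  rw [tsum_congr step, ENNReal.tsum_mul_left, ENNReal.tsum_geometric]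
  have h1 : 1 - ENNReal.ofReal (d * (1 - α)) = ENNReal.ofReal (1 - d * (1 - α)) := by
    rw [ENNReal.ofReal_sub 1 (by positivity), ENNReal.ofReal_one]
  rw [h1, ENNReal.ofReal_div_of_pos hy0, div_eq_mul_inv]

/-- Equations (3.11)–(3.12): let `φ_α = Σ_{I ∈ 𝒮} (x_I / a_I^{1/q}) χ_{A_I}` where the
`A_I ⊆ I` are pairwise almost disjoint, cover `X` up to measure zero, and satisfy
`μ(A_I) = α μ(I)`; here `x_I = λ γ^{r(I)} μ(I)^{1/q}`, `a_I = α μ(I)`,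
`λ = f α^{-1/q'} (1 - γ(1-α))` and `γ = (z-α)/(z(1-α))`. Then `∫_X φ_α dμ = f` and
`∫_X φ_α^q dμ = f^q α (1-α)^{q-1} / (-(z-α)^q + (1-α)^{q-1} z^q)`. -/
theorem integrals_of_phi_alpha {X : Type*} [MeasurableSpace X]
    (μ : Measure X) [IsProbabilityMeasure μ]
    (α γ lam q q' f z : ℝ) (hα0 : 0 < α) (hα1 : α < 1) (hq : 1 < q)
    (hq' : 1 / q + 1 / q' = 1) (hf : 0 < f) (hz : 1 < z)
    (hγdef : γ = (z - α) / (z * (1 - α)))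
    (hγ1 : γ * (1 - α) < 1) (hγq : γ ^ q * (1 - α) < 1)
    (hlamdef : lam = f * α ^ (-(1 / q')) * (1 - γ * (1 - α)))
    (S : Set (Set X)) (hScount : S.Countable)
    (r : Set X → ℕ) (parent : Set X → Set X)
    (huniv : Set.univ ∈ S) (hr0 : r Set.univ = 0)
    (hroot : ∀ I ∈ S, r I = 0 → I = Set.univ)
    (hparent : ∀ J ∈ S, 0 < r J →
      parent J ∈ S ∧ J ⊆ parent J ∧ r J = r (parent J) + 1)
    (hchild : ∀ I ∈ S,
      ∑' J : {J : Set X // J ∈ S ∧ parent J = I ∧ r J = r I + 1}, μ (J : Set X) =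
        ENNReal.ofReal (1 - α) * μ I)
    (hanc : ∀ I ∈ S, ∀ J ∈ S, r I < r J → J ⊆ I → parent J ⊆ I)
    (hself : ∀ I ∈ S, ∀ J ∈ S, J ⊆ I → r J = r I → J = I)
    (A : Set X → Set X)
    (hAmeas : ∀ I ∈ S, MeasurableSet (A I))
    (hAsub : ∀ I ∈ S, A I ⊆ I)
    (hAmes : ∀ I ∈ S, μ (A I) = ENNReal.ofReal α * μ I)
    (hAdisj : ∀ I ∈ S, ∀ J ∈ S, I ≠ J → μ (A I ∩ A J) = 0)
    (hAcover : μ (Set.univ \ ⋃ I ∈ S, A I) = 0)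
    (φ : X → ℝ)
    (hφdef : φ = fun x =>
      ∑' I : S,
        (lam * γ ^ r (I : Set X) * ((μ (I : Set X)).toReal) ^ (1 / q) /
            (α * (μ (I : Set X)).toReal) ^ (1 / q)) *
          Set.indicator (A (I : Set X)) (fun _ => (1 : ℝ)) x) :
    (∫ x, φ x ∂μ) = f ∧
    (∫ x, φ x ^ q ∂μ) =
      f ^ q * α * (1 - α) ^ (q - 1) /
        (-(z - α) ^ q + (1 - α) ^ (q - 1) * z ^ q) := by
  have h1α : (0:ℝ) < 1 - α := by linarith
  have hz0 : (0:ℝ) < z := by linarith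
  have hzα : (0:ℝ) < z - α := by linarith
  have hγ0 : 0 < γ := by rw [hγdef]; positivity
  have hq0 : (0:ℝ) < q := by linarith
  have hqne : q ≠ 0 := ne_of_gt hq0
  have hyval : 1 - γ * (1 - α) = α / z := by
    rw [hγdef]; field_simp; ring
  have hy0 : 0 < 1 - γ * (1 - α) := by rw [hyval]; positivity
  have hlam0 : 0 < lam := by
    rw [hlamdef]
    have := Real.rpow_pos_of_pos hα0 (-(1/q'))
    positivity
  set k : ℝ := lam * α ^ (-(1/q)) with hkdef
  have hk0 : 0 < k := by
    have := Real.rpow_pos_of_pos hα0 (-(1/q))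
    positivity
  have hγq0 : (0:ℝ) ≤ γ ^ q := Real.rpow_nonneg hγ0.le q
  have hrank := rank_measure μ α S r parent huniv hr0 hroot hparent hchild
  -- coefficient simplification
  have hcoef : ∀ I : Set X, μ I ≠ 0 →
      lam * γ ^ r I * ((μ I).toReal) ^ (1/q) / (α * (μ I).toReal) ^ (1/q) = k * γ ^ r I := by
    intro I hI
    have ht0 : 0 < (μ I).toReal := ENNReal.toReal_pos hI (measure_ne_top μ I)
    have h1 : (α * (μ I).toReal) ^ (1/q) = α ^ (1/q) * ((μ I).toReal) ^ (1/q) :=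
      Real.mul_rpow hα0.le ht0.le
    have h2 : ((μ I).toReal) ^ (1/q) ≠ 0 := ne_of_gt (Real.rpow_pos_of_pos ht0 _)
    have h3 : α ^ (1/q) ≠ 0 := ne_of_gt (Real.rpow_pos_of_pos hα0 _)
    have h4 : α ^ (-(1/q)) = (α ^ (1/q))⁻¹ := Real.rpow_neg hα0.le (1/q)
    rw [h1, hkdef, h4]
    field_simp
  -- the null set
  set N : Set X := (Set.univ \ ⋃ I ∈ S, A I) ∪
    ((⋃ I ∈ S, ⋃ J ∈ S, ⋃ _ : I ≠ J, A I ∩ A J) ∪ ⋃ I ∈ S, ⋃ _ : μ I = 0, A I)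
    with hNdef
  have hN : μ N = 0 := by
    refine measure_union_null hAcover (measure_union_null ?_ ?_)
    · refine (measure_biUnion_null_iff hScount).2 fun I hI => ?_
      refine (measure_biUnion_null_iff hScount).2 fun J hJ => ?_
      exact measure_iUnion_null fun h => hAdisj I hI J hJ h
    · refine (measure_biUnion_null_iff hScount).2 fun I hI => ?_
      exact measure_iUnion_null fun h => by rw [hAmes I hI, h, mul_zero]
  have hfacts : ∀ x, x ∉ N → (∃ I ∈ S, x ∈ A I) ∧
      (∀ I ∈ S, ∀ J ∈ S, I ≠ J → x ∈ A I → x ∈ A J → False) ∧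
      (∀ I ∈ S, μ I = 0 → x ∈ A I → False) := by
    intro x hx
    rw [hNdef] at hx
    simp only [Set.mem_union, Set.mem_diff, Set.mem_univ, true_and, not_or, not_not,
      Set.mem_iUnion, not_exists, Set.mem_inter_iff, not_and, exists_prop] at hx
    obtain ⟨h1, h2, h3⟩ := hx
    push_neg at h1
    exact ⟨h1, fun I hI J hJ hne hxI hxJ => h2 I hI J hJ hne hxI hxJ,
      fun I hI h0 hxI => h3 I hI h0 hxI⟩
  have hcov : ∀ x ∉ N, ∃ I ∈ S, x ∈ A I := fun x hx => (hfacts x hx).1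
  have hdisj' : ∀ x ∉ N, ∀ I ∈ S, ∀ J ∈ S, x ∈ A I → x ∈ A J → I = J := by
    intro x hx I hI J hJ hxI hxJ
    by_contra hne
    exact (hfacts x hx).2.1 I hI J hJ hne hxI hxJ
  -- values of φ
  have hφval : ∀ x ∉ N, ∀ I ∈ S, x ∈ A I → φ x = k * γ ^ r I := by
    intro x hx I hI hxI
    have hμI : μ I ≠ 0 := fun h0 => (hfacts x hx).2.2 I hI h0 hxI
    rw [hφdef]
    show (∑' J : S,
        (lam * γ ^ r (J : Set X) * ((μ (J : Set X)).toReal) ^ (1 / q) /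
            (α * (μ (J : Set X)).toReal) ^ (1 / q)) *
          Set.indicator (A (J : Set X)) (fun _ => (1 : ℝ)) x) = k * γ ^ r I
    rw [tsum_eq_single (⟨I, hI⟩ : S) ?_]
    · rw [Set.indicator_of_mem hxI, mul_one]
      exact hcoef I hμI
    · intro J hJ
      have hxJ : x ∉ A (J : Set X) := fun hmem =>
        hJ (Subtype.ext (hdisj' x hx (J : Set X) J.2 I hI hmem hxI))
      rw [Set.indicator_of_notMem hxJ, mul_zero]
  have hpow : ∀ n : ℕ, (γ ^ n) ^ q = (γ ^ q) ^ n := by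
    intro n
    rw [← Real.rpow_natCast γ n, ← Real.rpow_natCast (γ ^ q) n,
      ← Real.rpow_mul hγ0.le, ← Real.rpow_mul hγ0.le, mul_comm]
  have hφqval : ∀ x ∉ N, ∀ I ∈ S, x ∈ A I → φ x ^ q = k ^ q * (γ ^ q) ^ r I := by
    intro x hx I hI hxI
    rw [hφval x hx I hI hxI, Real.mul_rpow hk0.le (pow_nonneg hγ0.le _), hpow]
  -- the two integrals
  have int1 : ∫ x, φ x ∂μ = (ENNReal.ofReal (k * α / (1 - γ * (1 - α)))).toReal := by
    rw [integral_aux μ α S hScount r hrank A hAmeas hAmes N hN hcov hdisj'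
      k γ hk0.le hγ0.le φ hφval, tsum_val α k γ hα0 hk0.le hγ0.le hα1 hγ1]
  have int2 : ∫ x, φ x ^ q ∂μ =
      (ENNReal.ofReal (k ^ q * α / (1 - γ ^ q * (1 - α)))).toReal := by
    rw [show (∫ x, φ x ^ q ∂μ) = ∫ x, (fun y => φ y ^ q) x ∂μ from rfl,
      integral_aux μ α S hScount r hrank A hAmeas hAmes N hN hcov hdisj'
      (k ^ q) (γ ^ q) (Real.rpow_nonneg hk0.le q) hγq0 (fun y => φ y ^ q) hφqval,
      tsum_val α (k ^ q) (γ ^ q) hα0 (Real.rpow_nonneg hk0.le q) hγq0 hα1 hγq]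
  -- algebra part 1
  have hXa : α ^ (-(1/q')) * α ^ (-(1/q)) * α = 1 := by
    have h5 : α ^ (-(1/q')) * α ^ (-(1/q)) * α ^ (1:ℝ) = α ^ (-(1/q') + -(1/q) + 1) := by
      rw [Real.rpow_add hα0, Real.rpow_add hα0]
    rw [Real.rpow_one] at h5
    rw [h5, show -(1/q') + -(1/q) + 1 = 0 by linarith, Real.rpow_zero]
  have halg1 : k * α / (1 - γ * (1 - α)) = f := by
    have hkα : k * α = f * (1 - γ * (1 - α)) := by
      rw [hkdef, hlamdef]
      calc f * α ^ (-(1/q')) * (1 - γ * (1-α)) * α ^ (-(1/q)) * α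
          = f * (1 - γ * (1-α)) * (α ^ (-(1/q')) * α ^ (-(1/q)) * α) := by ring
        _ = f * (1 - γ * (1-α)) := by rw [hXa, mul_one]
    rw [hkα, mul_div_assoc, div_self (ne_of_gt hy0), mul_one]
  -- algebra part 2
  set P : ℝ := z ^ q with hPdef
  set Q : ℝ := (1 - α) ^ (q - 1) with hQdef
  set R : ℝ := (z - α) ^ q with hRdef
  have hP0 : 0 < P := Real.rpow_pos_of_pos hz0 q
  have hQ0 : 0 < Q := Real.rpow_pos_of_pos h1α (q - 1)
  have hR0 : 0 < R := Real.rpow_pos_of_pos hzα q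
  have hQval : (1 - α) ^ q = Q * (1 - α) := by
    nth_rewrite 1 [show q = q - 1 + 1 by ring]
    rw [Real.rpow_add h1α, Real.rpow_one, ← hQdef]
  have hγqval : γ ^ q * (1 - α) = R / (P * Q) := by
    rw [hγdef, Real.div_rpow hzα.le (by positivity), Real.mul_rpow hz0.le h1α.le, hQval]
    rw [hPdef, hRdef]
    field_simp
  have hD : 1 - γ ^ q * (1 - α) = (P * Q - R) / (P * Q) := by
    rw [hγqval]; field_simp
  have hPQR : 0 < P * Q - R := by
    have h7 := hγq
    rw [hγqval] at h7
    have h8 := (div_lt_one (by positivity : (0:ℝ) < P * Q)).1 h7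
    linarith
  have hkq : k ^ q * α = lam ^ q := by
    rw [hkdef, Real.mul_rpow hlam0.le (Real.rpow_nonneg hα0.le _),
      ← Real.rpow_mul hα0.le]
    rw [show -(1/q) * q = -1 by field_simp, Real.rpow_neg_one]
    field_simp
  have hlamq : lam ^ q = f ^ q * α / P := by
    rw [hlamdef, hyval]
    rw [Real.mul_rpow (by positivity) (by positivity),
      Real.mul_rpow hf.le (Real.rpow_nonneg hα0.le _), Real.div_rpow hα0.le hz0.le]
    have h5 : (α ^ (-(1/q'))) ^ q = α ^ (1 - q) := by
      rw [← Real.rpow_mul hα0.le]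
      congr 1
      have hq'v : 1/q' = 1 - 1/q := by linarith
      rw [hq'v]
      field_simp
      ring
    rw [h5, hPdef]
    calc f ^ q * α ^ (1-q) * (α ^ q / z ^ q)
        = f ^ q * (α ^ (1-q) * α ^ q) / z ^ q := by ring
      _ = f ^ q * α ^ ((1-q) + q) / z ^ q := by rw [Real.rpow_add hα0]
      _ = f ^ q * α / z ^ q := by norm_num
  have halg2 : k ^ q * α / (1 - γ ^ q * (1 - α)) = f ^ q * α * Q / (-R + Q * P) := by
    rw [hkq, hlamq, hD, show -R + Q * P = P * Q - R by ring]
    have h1 : P ≠ 0 := ne_of_gt hP0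
    have h2 : Q ≠ 0 := ne_of_gt hQ0
    have h3 : P * Q - R ≠ 0 := ne_of_gt hPQR
    field_simp
  constructor
  · rw [int1, ENNReal.toReal_ofReal (by positivity), halg1]
  · rw [int2, ENNReal.toReal_ofReal (div_nonneg (by positivity)
      (le_of_lt (hD ▸ div_pos hPQR (mul_pos hP0 hQ0)))), halg2]
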